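/- Let A be a left Noetherian K-algebra. If the injective hull of every finite dimensional irreducible left A-module is locally finite, then the injective hull of every locally finite left A-module is locally finite. -/

import Mathlib

universe v

/-- A module is locally finite if every cyclic `A`-submodule is
finite dimensional over the base field `K`. -/
def LocFin (K A M : Type*) [Field K] [Ring A] [Algebra K A]
    [AddCommGroup M] [Module A M] [Module K M] [IsScalarTower K A M] : Prop :=
  ∀ m : M, FiniteDimensional K ((Submodule.span A {m}).restrictScalars K)

/-- A submodule is essential if it meets every nonzero submodule nontrivially. -/
def EssSub {A M : Type*} [Ring A] [AddCommGroup M] [Module A M]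
    (N : Submodule A M) : Prop :=
  ∀ P : Submodule A M, P ⊓ N = ⊥ → P = ⊥

section Aux

variable {K A : Type*} [Field K] [Ring A] [Algebra K A]
variable {M : Type*} [AddCommGroup M] [Module A M] [Module K M] [IsScalarTower K A M]

theorem AuxFdIff (p : Submodule A M) :
    FiniteDimensional K (p.restrictScalars K) ↔ FiniteDimensional K p := by
  constructor
  · intro h
    exact ((Submodule.restrictScalarsEquiv K A M p).restrictScalars K).finiteDimensional
  · intro h
    exact ((Submodule.restrictScalarsEquiv K A M p).restrictScalars K).symm.finiteDimensional

theorem AuxFinrankRS (p : Submodule A M) :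
    Module.finrank K (p.restrictScalars K) = Module.finrank K p :=
  ((Submodule.restrictScalarsEquiv K A M p).restrictScalars K).finrank_eq

theorem AuxRsMono {p q : Submodule A M} (h : p ≤ q) :
    p.restrictScalars K ≤ q.restrictScalars K := fun _ hx => h hx

theorem AuxRsLt {p q : Submodule A M} (h : p < q) :
    p.restrictScalars K < q.restrictScalars K :=
  ⟨AuxRsMono h.le, fun hba => h.not_ge fun x hx => hba hx⟩

theorem AuxFdLe {p q : Submodule A M} (h : p ≤ q)
    (hq : FiniteDimensional K (q.restrictScalars K)) :
    FiniteDimensional K (p.restrictScalars K) := by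
  haveI := hq
  exact Submodule.finiteDimensional_of_le (AuxRsMono h)

theorem AuxFdSup {p q : Submodule A M} (hp : FiniteDimensional K (p.restrictScalars K))
    (hq : FiniteDimensional K (q.restrictScalars K)) :
    FiniteDimensional K ((p ⊔ q).restrictScalars K) := by
  haveI := hp; haveI := hq
  have hle : (p ⊔ q).restrictScalars K ≤ p.restrictScalars K ⊔ q.restrictScalars K := by
    intro x hx
    rw [Submodule.restrictScalars_mem] at hx
    obtain ⟨y, hy, z, hz, rfl⟩ := Submodule.mem_sup.mp hx
    exact Submodule.add_mem_sup ((Submodule.restrictScalars_mem K p y).mpr hy)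
      ((Submodule.restrictScalars_mem K q z).mpr hz)
  exact Submodule.finiteDimensional_of_le hle

theorem AuxFdFg (hM : LocFin K A M) {p : Submodule A M} (hp : p.FG) :
    FiniteDimensional K (p.restrictScalars K) := by
  classical
  obtain ⟨s, rfl⟩ := hp
  induction s using Finset.induction_on with
  | empty =>
      rw [Finset.coe_empty, Submodule.span_empty, Submodule.restrictScalars_bot]
      infer_instance
  | insert _ _ ha ih =>
      rw [Finset.coe_insert, Submodule.span_insert]
      exact AuxFdSup (hM _) ih

theorem AuxMapEqBot {P : Submodule A M} {Q : Submodule A P}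
    (h : Q.map P.subtype = ⊥) : Q = ⊥ := by
  rw [Submodule.eq_bot_iff] at h ⊢
  intro x hx
  have := h _ (Submodule.mem_map_of_mem hx)
  exact Subtype.ext this

theorem AuxEssComap {N : Submodule A M} (hN : EssSub N) (P : Submodule A M) :
    EssSub (N.comap P.subtype) := by
  intro Q hQ
  have h2 : Submodule.map P.subtype Q ≤ P := Submodule.map_subtype_le P Q
  have hmap : Submodule.map P.subtype Q ⊓ N = ⊥ := by
    have h3 : Submodule.map P.subtype (Q ⊓ N.comap P.subtype)
        = Submodule.map P.subtype Q ⊓ (P ⊓ N) := by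
      rw [Submodule.map_inf _ (Submodule.injective_subtype P), Submodule.map_comap_subtype]
    rw [hQ, Submodule.map_bot] at h3
    rw [← inf_assoc, inf_eq_left.mpr h2] at h3
    exact h3.symm
  exact AuxMapEqBot (hN _ hmap)

theorem AuxExistsSimple : ∀ (n : ℕ) (N : Submodule A M), N ≠ ⊥ →
    FiniteDimensional K (N.restrictScalars K) →
    Module.finrank K (N.restrictScalars K) ≤ n →
    ∃ S : Submodule A M, S ≤ N ∧ S ≠ ⊥ ∧ IsSimpleModule A S := by
  intro n
  induction n with
  | zero =>
      intro N hN hfd hle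
      exfalso
      haveI := hfd
      apply hN
      rw [← Submodule.restrictScalars_eq_bot_iff (S := K)]
      rw [← Submodule.finrank_eq_zero (S := N.restrictScalars K)]
      omega
  | succ n ih =>
      intro N hN hfd hle
      by_cases hs : IsSimpleModule A N
      · exact ⟨N, le_rfl, hN, hs⟩
      · haveI := hfd
        obtain ⟨x, hxN, hx0⟩ := (Submodule.ne_bot_iff N).mp hN
        have hnt : (⊥ : Submodule A N) ≠ ⊤ := by
          intro h
          have hmem : (⟨x, hxN⟩ : N) ∈ (⊥ : Submodule A N) := h ▸ Submodule.mem_top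
          rw [Submodule.mem_bot] at hmem
          exact hx0 (congrArg Subtype.val hmem)
        by_cases hall : ∀ a : Submodule A N, a = ⊥ ∨ a = ⊤
        · exact absurd (by haveI := nontrivial_of_ne _ _ hnt; haveI : IsSimpleOrder (Submodule A N) := ⟨hall⟩; exact ⟨⟩) hs
        · push_neg at hall
          obtain ⟨a, ha0, haT⟩ := hall
          have hS'le : a.map N.subtype ≤ N := Submodule.map_subtype_le N a
          have hS'0 : a.map N.subtype ≠ ⊥ := fun h => ha0 (AuxMapEqBot h)
          have hS'lt : a.map N.subtype < N := by
            refine lt_of_le_of_ne hS'le fun h => haT ?_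
            apply Submodule.map_injective_of_injective (Submodule.injective_subtype N)
            rw [h, Submodule.map_subtype_top]
          have hfdS' := AuxFdLe (K := K) hS'le hfd
          have hlt : Module.finrank K ((a.map N.subtype).restrictScalars K)
              < Module.finrank K (N.restrictScalars K) :=
            Submodule.finrank_lt_finrank_of_lt (AuxRsLt hS'lt)
          obtain ⟨S, h1, h2, h3⟩ := ih (a.map N.subtype) hS'0 hfdS' (by omega)
          exact ⟨S, h1.trans hS'le, h2, h3⟩

theorem AuxZorn (S : Submodule A M) :
    ∃ P : Submodule A M, P ⊓ S = ⊥ ∧ ∀ Q : Submodule A M, Q ⊓ S = ⊥ → P ≤ Q → Q = P := by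
  have hcond : ∀ c ⊆ {P : Submodule A M | P ⊓ S = ⊥}, IsChain (· ≤ ·) c →
      ∀ y ∈ c, ∃ ub ∈ {P : Submodule A M | P ⊓ S = ⊥}, ∀ z ∈ c, z ≤ ub := by
    intro c hcs hchain y hyc
    refine ⟨sSup c, ?_, fun z hz => le_sSup hz⟩
    rw [Set.mem_setOf_eq, Submodule.eq_bot_iff]
    intro x hx
    obtain ⟨hx1, hx2⟩ := Submodule.mem_inf.mp hx
    obtain ⟨p, hpc, hxp⟩ :=
      (Submodule.mem_sSup_of_directed ⟨y, hyc⟩ hchain.directedOn).mp hx1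
    have hps := hcs hpc
    rw [Set.mem_setOf_eq, Submodule.eq_bot_iff] at hps
    exact hps x (Submodule.mem_inf.mpr ⟨hxp, hx2⟩)
  obtain ⟨P, -, hPs, hPmax⟩ :=
    zorn_le_nonempty₀ {P : Submodule A M | P ⊓ S = ⊥} hcond ⊥ (by simp)
  exact ⟨P, hPs, fun Q hQ hle => le_antisymm (hPmax hQ hle) hle⟩

theorem AuxEssQuot {S P : Submodule A M} (hPS : P ⊓ S = ⊥)
    (hmax : ∀ Q : Submodule A M, Q ⊓ S = ⊥ → P ≤ Q → Q = P) :
    EssSub (S.map P.mkQ) := by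
  intro Q hQ
  by_cases h : Q.comap P.mkQ ⊓ S = ⊥
  · have hPle : P ≤ Q.comap P.mkQ := Submodule.le_comap_mkQ P Q
    have heq := hmax _ h hPle
    have hQ' : Q = (Q.comap P.mkQ).map P.mkQ :=
      (Submodule.map_comap_eq_of_surjective P.mkQ_surjective Q).symm
    rw [hQ', heq, Submodule.mkQ_map_self]
  · exfalso
    obtain ⟨s, hs, hs0⟩ := (Submodule.ne_bot_iff _).mp h
    obtain ⟨hsQ, hsS⟩ := Submodule.mem_inf.mp hs
    have h1 : P.mkQ s ∈ Q ⊓ S.map P.mkQ := ⟨hsQ, Submodule.mem_map_of_mem hsS⟩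
    rw [hQ, Submodule.mem_bot] at h1
    rw [Submodule.mkQ_apply, Submodule.Quotient.mk_eq_zero] at h1
    have h2 : s ∈ P ⊓ S := ⟨h1, hsS⟩
    rw [hPS, Submodule.mem_bot] at h2
    exact hs0 h2

theorem AuxSimpleFdMap {S P : Submodule A M} (hPS : P ⊓ S = ⊥)
    (hsim : IsSimpleModule A S) (hfd : FiniteDimensional K (S.restrictScalars K)) :
    IsSimpleModule A (S.map P.mkQ) ∧
      FiniteDimensional K ((S.map P.mkQ).restrictScalars K) := by
  have hinj : Function.Injective (P.mkQ ∘ₗ S.subtype) := by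
    rw [← LinearMap.ker_eq_bot, Submodule.eq_bot_iff]
    intro x hx
    rw [LinearMap.mem_ker, LinearMap.comp_apply] at hx
    have hxP : (x : M) ∈ P := by
      rwa [Submodule.mkQ_apply, Submodule.Quotient.mk_eq_zero] at hx
    have h2 : (x : M) ∈ P ⊓ S := ⟨hxP, x.2⟩
    rw [hPS, Submodule.mem_bot] at h2
    exact Subtype.ext h2
  have hrange : LinearMap.range (P.mkQ ∘ₗ S.subtype) = S.map P.mkQ := by
    rw [LinearMap.range_comp, Submodule.range_subtype]
  let e : S ≃ₗ[A] (S.map P.mkQ) :=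
    (LinearEquiv.ofInjective _ hinj).trans (LinearEquiv.ofEq _ _ hrange)
  constructor
  · haveI := hsim
    exact IsSimpleModule.congr e.symm
  · haveI := (AuxFdIff S).mp hfd
    haveI := (e.restrictScalars K).finiteDimensional
    exact (AuxFdIff _).mpr inferInstance

theorem AuxFdComap {p q : Submodule A M}
    (h : FiniteDimensional K ((p ⊓ q).restrictScalars K)) :
    FiniteDimensional K ((q.comap p.subtype).restrictScalars K) := by
  have e : (q.comap p.subtype) ≃ₗ[A] (p ⊓ q : Submodule A M) :=
    (Submodule.equivMapOfInjective p.subtype (Submodule.injective_subtype p) _).trans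
      (LinearEquiv.ofEq _ _ (Submodule.map_comap_subtype p q))
  haveI := (AuxFdIff _).mp h
  haveI := (e.restrictScalars K).symm.finiteDimensional
  exact (AuxFdIff _).mpr inferInstance

theorem AuxFdOfLocFinSub {P D : Submodule A M} (hP : LocFin K A P) (hDP : D ≤ P)
    (hfg : D.FG) : FiniteDimensional K (D.restrictScalars K) := by
  have hmap : (D.comap P.subtype).map P.subtype = D := by
    rw [Submodule.map_comap_subtype, inf_eq_right.mpr hDP]
  have hfg' : (D.comap P.subtype).FG :=
    Submodule.fg_of_fg_map_injective P.subtype (Submodule.injective_subtype P)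
      (by rw [hmap]; exact hfg)
  have hfd := AuxFdFg hP hfg'
  have e : (D.comap P.subtype) ≃ₗ[A] D :=
    (Submodule.equivMapOfInjective P.subtype (Submodule.injective_subtype P) _).trans
      (LinearEquiv.ofEq _ _ hmap)
  haveI := (AuxFdIff _).mp hfd
  haveI := (e.restrictScalars K).finiteDimensional
  exact (AuxFdIff _).mpr inferInstance

theorem AuxExt [IsNoetherianRing A] {P : Submodule A M} (hP : LocFin K A P)
    (hQ : LocFin K A (M ⧸ P)) : LocFin K A M := by
  intro m
  set C := Submodule.span A ({m} : Set M) with hC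
  haveI : IsNoetherian A C := isNoetherian_of_fg_of_noetherian C (Submodule.fg_span_singleton m)
  have hfgD : (C ⊓ P).FG := by
    have h1 : (P.comap C.subtype).FG := IsNoetherian.noetherian _
    have h2 := h1.map C.subtype
    rwa [Submodule.map_comap_subtype] at h2
  have hfdD : FiniteDimensional K ((C ⊓ P).restrictScalars K) :=
    AuxFdOfLocFinSub hP inf_le_right hfgD
  set f : C →ₗ[A] M ⧸ P := P.mkQ ∘ₗ C.subtype with hf
  have hker : LinearMap.ker f = P.comap C.subtype := by
    ext x
    simp [hf, Submodule.Quotient.mk_eq_zero]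
  have hrange : LinearMap.range f = C.map P.mkQ := by
    rw [hf, LinearMap.range_comp, Submodule.range_subtype]
  have hfdker : FiniteDimensional K ((LinearMap.ker f).restrictScalars K) := by
    rw [hker]; exact AuxFdComap hfdD
  have hfdrange : FiniteDimensional K ((LinearMap.range f).restrictScalars K) := by
    rw [hrange, hC, Submodule.map_span, Set.image_singleton]
    exact hQ (P.mkQ m)
  set g := (f.restrictScalars K) with hg
  have hkerg : LinearMap.ker g = (LinearMap.ker f).restrictScalars K :=
    LinearMap.ker_restrictScalars K f
  have hrangeg : LinearMap.range g = (LinearMap.range f).restrictScalars K := by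
    ext x
    simp [hg, LinearMap.mem_range, Submodule.restrictScalars_mem]
  haveI hnk : IsNoetherian K (LinearMap.ker g) := by
    rw [hkerg]
    haveI := hfdker
    infer_instance
  haveI hnr : IsNoetherian K (LinearMap.range g) := by
    rw [hrangeg]
    haveI := hfdrange
    infer_instance
  have hnoeth : IsNoetherian K C :=
    isNoetherian_of_range_eq_ker (LinearMap.ker g).subtype g.rangeRestrict
      (by rw [Submodule.range_subtype, LinearMap.ker_rangeRestrict])
  haveI := hnoeth
  haveI hfdC : FiniteDimensional K C := Module.finite_def.mpr (IsNoetherian.noetherian ⊤)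
  exact (AuxFdIff C).mpr hfdC

theorem AuxLocFinOfBotEss (h : EssSub (⊥ : Submodule A M)) : LocFin K A M := by
  intro m
  have hb : Submodule.span A ({m} : Set M) = ⊥ := h _ (by rw [inf_bot_eq])
  rw [hb, Submodule.restrictScalars_bot]
  infer_instance

end Aux

section Claim

variable {K A : Type*} [Field K] [Ring A] [Algebra K A] [IsNoetherianRing A]

theorem AuxClaim
    (hsimple : ∀ (M : Type v) [AddCommGroup M] [Module A M] [Module K M] [IsScalarTower K A M]
      (N : Submodule A M), EssSub N → IsSimpleModule A N →
      FiniteDimensional K (N.restrictScalars K) → LocFin K A M) :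
    ∀ (n : ℕ) (M : Type v) [AddCommGroup M] [Module A M] [Module K M] [IsScalarTower K A M]
      (N : Submodule A M), EssSub N → FiniteDimensional K (N.restrictScalars K) →
      Module.finrank K (N.restrictScalars K) ≤ n → LocFin K A M := by
  intro n
  induction n with
  | zero =>
      intro M _ _ _ _ N hess hfd hrank
      haveI := hfd
      have hN0 : N = ⊥ := by
        rw [← Submodule.restrictScalars_eq_bot_iff (S := K)]
        rw [← Submodule.finrank_eq_zero (S := N.restrictScalars K)]
        omega
      exact AuxLocFinOfBotEss (hN0 ▸ hess)
  | succ n ih =>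
      intro M _ _ _ _ N hess hfd hrank
      by_cases hN0 : N = ⊥
      · exact AuxLocFinOfBotEss (hN0 ▸ hess)
      · obtain ⟨S, hSN, hS0, hSsim⟩ := AuxExistsSimple (n + 1) N hN0 hfd hrank
        have hfdS := AuxFdLe (K := K) hSN hfd
        obtain ⟨P, hPS, hPmax⟩ := AuxZorn S
        have hess' := AuxEssQuot hPS hPmax
        obtain ⟨hsim', hfd'⟩ := AuxSimpleFdMap (K := K) hPS hSsim hfdS
        have hquot : LocFin K A (M ⧸ P) := hsimple (M ⧸ P) (S.map P.mkQ) hess' hsim' hfd'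
        have hPN : P ⊓ N < N := by
          refine lt_of_le_of_ne inf_le_right fun h => hS0 ?_
          have hNP : N ≤ P := h ▸ inf_le_left
          have : P ⊓ S = S := inf_eq_right.mpr (hSN.trans hNP)
          rw [hPS] at this
          exact this.symm
        have hrank' : Module.finrank K ((N.comap P.subtype).restrictScalars K) ≤ n := by
          have e : (N.comap P.subtype) ≃ₗ[A] (P ⊓ N : Submodule A M) :=
            (Submodule.equivMapOfInjective P.subtype (Submodule.injective_subtype P) _).trans
              (LinearEquiv.ofEq _ _ (Submodule.map_comap_subtype P N))
          have h1 : Module.finrank K ((N.comap P.subtype).restrictScalars K)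
              = Module.finrank K ((P ⊓ N).restrictScalars K) := by
            rw [AuxFinrankRS, AuxFinrankRS]
            exact (e.restrictScalars K).finrank_eq
          haveI := hfd
          have h2 : Module.finrank K ((P ⊓ N).restrictScalars K)
              < Module.finrank K (N.restrictScalars K) :=
            Submodule.finrank_lt_finrank_of_lt (AuxRsLt hPN)
          omega
        have hP : LocFin K A P :=
          ih P (N.comap P.subtype) (AuxEssComap hess P)
            (AuxFdComap (AuxFdLe (K := K) inf_le_right hfd)) hrank'
        exact AuxExt hP hquot

end Claim

theorem stmt2 (K A : Type*) [Field K] [Ring A] [Algebra K A] [IsNoetherianRing A]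
    (hsimple : ∀ (M : Type v) [AddCommGroup M] [Module A M] [Module K M] [IsScalarTower K A M]
      (N : Submodule A M), EssSub N → IsSimpleModule A N →
      FiniteDimensional K (N.restrictScalars K) → LocFin K A M) :
    ∀ (M : Type v) [AddCommGroup M] [Module A M] [Module K M] [IsScalarTower K A M]
      (N : Submodule A M), EssSub N → LocFin K A N → LocFin K A M := by
  intro M _ _ _ _ N hess hlf m
  set C := Submodule.span A ({m} : Set M) with hC
  haveI : IsNoetherian A C := isNoetherian_of_fg_of_noetherian C (Submodule.fg_span_singleton m)
  have hfgD : (C ⊓ N).FG := by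
    have h1 : (N.comap C.subtype).FG := IsNoetherian.noetherian _
    have h2 := h1.map C.subtype
    rwa [Submodule.map_comap_subtype] at h2
  have hfdD : FiniteDimensional K ((C ⊓ N).restrictScalars K) :=
    AuxFdOfLocFinSub hlf inf_le_right hfgD
  have hessC : EssSub (N.comap C.subtype) := AuxEssComap hess C
  have hfdC : FiniteDimensional K ((N.comap C.subtype).restrictScalars K) := AuxFdComap hfdD
  have hCloc : LocFin K A C :=
    AuxClaim hsimple (Module.finrank K ((N.comap C.subtype).restrictScalars K)) C
      (N.comap C.subtype) hessC hfdC le_rfl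
  have htop : Submodule.span A {(⟨m, Submodule.mem_span_singleton_self m⟩ : C)} = ⊤ := by
    apply Submodule.map_injective_of_injective (Submodule.injective_subtype C)
    rw [Submodule.map_span, Set.image_singleton, Submodule.map_subtype_top]
    exact hC.symm
  have h1 := hCloc ⟨m, Submodule.mem_span_singleton_self m⟩
  rw [htop] at h1
  haveI := (AuxFdIff (⊤ : Submodule A C)).mp h1
  haveI : FiniteDimensional K C :=
    ((Submodule.topEquiv (R := A) (M := C)).restrictScalars K).finiteDimensional
  exact (AuxFdIff C).mpr inferInstance
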